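/- Fix m ≥ 1 and a row vector x : Fin m → ZMod 2 with x ≠ 0. The map S ↦ x ·ᵥ S (row-vector–matrix product Matrix.vecMul), defined on the set of symmetric m×m matrices over ZMod 2 (Sᵀ = S), is surjective onto Fin m → ZMod 2, and all its fibers have the same cardinality 2^{m(m+1)/2} / 2^m. Equivalently, if S is a uniformly random symmetric matrix over ZMod 2 and x ≠ 0, then x ·ᵥ S is uniformly distributed on Fin m → ZMod 2. -/

import Mathlib

open Matrix
open scoped Classical

lemma surj_aux (m : ℕ) (x : Fin m → ZMod 2) (hx : x ≠ 0) (v : Fin m → ZMod 2) :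
    ∃ S : Matrix (Fin m) (Fin m) (ZMod 2), Sᵀ = S ∧ x ᵥ* S = v := by
  obtain ⟨i, hi⟩ := Function.ne_iff.mp hx
  have key : ∀ a : ZMod 2, a ≠ 0 → a = 1 := by decide
  have hxi : x i = 1 := key _ (by simpa using hi)
  set c := x ⬝ᵥ v with hc
  refine ⟨Matrix.of fun j k => (if j = i then v k else 0) + (if k = i then v j else 0)
      + (if j = i then (if k = i then c else 0) else 0), ?_, ?_⟩
  · ext j k
    by_cases hj : j = i <;> by_cases hk : k = i <;>
      simp [Matrix.transpose_apply, hj, hk]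
  · funext k
    simp only [Matrix.vecMul, dotProduct, Matrix.of_apply, mul_add,
      Finset.sum_add_distrib, mul_ite, mul_zero, Finset.sum_ite_eq']
    by_cases hk : k = i
    · subst hk
      simp [hxi, hc, dotProduct, Finset.mul_sum]
      rw [add_assoc]
      simp [CharTwo.add_self_eq_zero]
    · simp [hk, hxi]

lemma card_symm (m : ℕ) :
    (Finset.univ.filter fun S : Matrix (Fin m) (Fin m) (ZMod 2) => Sᵀ = S).card
      = 2 ^ (m * (m + 1) / 2) := by
  have e : {S : Matrix (Fin m) (Fin m) (ZMod 2) // Sᵀ = S} ≃ (Sym2 (Fin m) → ZMod 2) :=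
    { toFun := fun S => Sym2.lift ⟨fun i j => S.1 i j, fun i j => by
        conv_lhs => rw [← S.2]
        simp [Matrix.transpose_apply]⟩
      invFun := fun f => ⟨Matrix.of fun i j => f s(i, j), by
        ext i j
        simp [Matrix.transpose_apply, Sym2.eq_swap]⟩
      left_inv := fun S => by ext i j; simp
      right_inv := fun f => by
        funext z
        induction z using Sym2.ind with
        | _ i j => simp }
  have h1 : (Finset.univ.filter fun S : Matrix (Fin m) (Fin m) (ZMod 2) => Sᵀ = S).card
      = Fintype.card {S : Matrix (Fin m) (Fin m) (ZMod 2) // Sᵀ = S} := by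
    rw [Fintype.card_subtype]
  rw [h1, Fintype.card_congr e, Fintype.card_fun, Sym2.card]
  simp [Nat.choose_two_right, Nat.mul_comm]

/-- For a fixed nonzero row vector `x` over `𝔽₂`, the map `S ↦ x ·ᵥ S`, defined on
symmetric `m×m` matrices over `𝔽₂`, is surjective onto all row vectors and all its
fibers have the same cardinality `2^(m(m+1)/2) / 2^m`; equivalently, a uniformly random
symmetric matrix maps `x` to a uniformly random vector. -/
theorem stmt_9 (m : ℕ) (hm : 1 ≤ m) (x : Fin m → ZMod 2) (hx : x ≠ 0) :
    (∀ v : Fin m → ZMod 2, ∃ S : Matrix (Fin m) (Fin m) (ZMod 2), Sᵀ = S ∧ x ᵥ* S = v) ∧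
      (∀ v : Fin m → ZMod 2,
        (Finset.univ.filter
            fun S : Matrix (Fin m) (Fin m) (ZMod 2) => Sᵀ = S ∧ x ᵥ* S = v).card
          = 2 ^ (m * (m + 1) / 2) / 2 ^ m) := by
  refine ⟨surj_aux m x hx, ?_⟩
  set F : (Fin m → ZMod 2) → Finset (Matrix (Fin m) (Fin m) (ZMod 2)) :=
    fun v => Finset.univ.filter fun S => Sᵀ = S ∧ x ᵥ* S = v with hF
  have hcardeq : ∀ v, (F v).card = (F 0).card := by
    intro v
    obtain ⟨S₀, hS₀t, hS₀v⟩ := surj_aux m x hx v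
    refine Finset.card_bij' (fun S _ => S - S₀) (fun T _ => T + S₀) ?_ ?_ ?_ ?_
    · intro S hS
      simp only [hF, Finset.mem_filter, Finset.mem_univ, true_and] at hS ⊢
      rw [Matrix.transpose_sub, Matrix.vecMul_sub, hS.1, hS.2, hS₀t, hS₀v]
      simp
    · intro T hT
      simp only [hF, Finset.mem_filter, Finset.mem_univ, true_and] at hT ⊢
      rw [Matrix.transpose_add, Matrix.vecMul_add, hT.1, hT.2, hS₀t, hS₀v]
      simp
    · intro S _; exact sub_add_cancel S S₀
    · intro T _; exact add_sub_cancel_right T S₀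
  intro v
  have hsum : ∑ w : Fin m → ZMod 2, (F w).card = 2 ^ (m * (m + 1) / 2) := by
    rw [← card_symm m]
    rw [Finset.card_eq_sum_card_fiberwise
      (f := fun S : Matrix (Fin m) (Fin m) (ZMod 2) => x ᵥ* S)
      (t := Finset.univ) (fun S _ => Finset.mem_univ _)]
    refine Finset.sum_congr rfl fun w _ => ?_
    rw [Finset.filter_filter]
  have hconst : ∑ w : Fin m → ZMod 2, (F w).card = 2 ^ m * (F 0).card := by
    rw [Finset.sum_congr rfl fun w _ => hcardeq w, Finset.sum_const, Finset.card_univ]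
    simp [Fintype.card_fun, mul_comm]
  have h0 : 2 ^ (m * (m + 1) / 2) = 2 ^ m * (F 0).card := by rw [← hsum, hconst]
  have : (F v).card = 2 ^ (m * (m + 1) / 2) / 2 ^ m := by
    rw [hcardeq v]
    symm
    exact Nat.div_eq_of_eq_mul_left (by positivity)
      (by rw [h0, mul_comm])
  simpa [hF] using this
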